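/- Let X₁, …, Xₙ be independent sub-uniform random variables (so that each Xᵢ ∈ (0,1] almost surely) and let Fₙ = −2 Σᵢ log(Xᵢ). Then for every t ≥ 2n, P(Fₙ ≥ t) ≤ exp{ n − t/2 − n·log(2n/t) }. -/

import Mathlib

open MeasureTheory Set

/-- A real-valued random variable `X` on a probability space `(Ω, P)` is *sub-uniform*
if it is dominated in the convex order by the uniform distribution `U` on `[0,1]`:
`E[h(X)] ≤ E[h(U)]` for every convex `h : ℝ → ℝ` for which both expectations exist.
(The expectation `E[h(X)]` exists, with a value in `(-∞, ∞]`, precisely when the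
negative part of `h ∘ X` is integrable; in that case the inequality
`E[h(X)] ≤ E[h(U)] < ∞` forces `h ∘ X` to be integrable.  The expectation `E[h(U)]`
always exists, since a convex function on `ℝ` is continuous, hence bounded on `[0,1]`.) -/
def SubUniform {Ω : Type*} [MeasurableSpace Ω] (P : Measure Ω) (X : Ω → ℝ) : Prop :=
  ∀ h : ℝ → ℝ, ConvexOn ℝ Set.univ h →
    Integrable (fun ω => max (-(h (X ω))) 0) P →
    Integrable (fun ω => h (X ω)) P ∧
      ∫ ω, h (X ω) ∂P ≤ ∫ x in Set.Icc (0:ℝ) 1, h x ∂volume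

namespace SubUnifAux

open Real


noncomputable def hE (a ε : ℝ) (x : ℝ) : ℝ :=
  if ε ≤ x then x ^ (-a) else ε ^ (-a) - a * ε ^ (-a - 1) * (x - ε)

noncomputable def dE (a ε : ℝ) (x : ℝ) : ℝ :=
  if ε ≤ x then -a * x ^ (-a - 1) else -a * ε ^ (-a - 1)

lemma linDeriv (a ε x : ℝ) :
    HasDerivAt (fun y : ℝ => ε ^ (-a) - a * ε ^ (-a - 1) * (y - ε)) (-a * ε ^ (-a - 1)) x := by
  have h : HasDerivAt (fun y : ℝ => a * ε ^ (-a - 1) * (y - ε)) (a * ε ^ (-a - 1)) x := by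
    simpa using ((hasDerivAt_id x).sub_const ε).const_mul (a * ε ^ (-a - 1))
  simpa [neg_mul] using h.const_sub (ε ^ (-a))

lemma hE_hasDerivAt {a ε : ℝ} (hε : 0 < ε) (x : ℝ) :
    HasDerivAt (hE a ε) (dE a ε x) x := by
  rcases lt_trichotomy x ε with hlt | rfl | hgt
  · have hev : hE a ε =ᶠ[nhds x]
        fun y : ℝ => ε ^ (-a) - a * ε ^ (-a - 1) * (y - ε) := by
      filter_upwards [Iio_mem_nhds hlt] with y hy
      exact if_neg (not_le.2 hy)
    have := (linDeriv a ε x).congr_of_eventuallyEq hev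
    simpa [dE, if_neg (not_le.2 hlt)] using this
  · have hne : x ≠ 0 := hε.ne'
    have hleft : HasDerivWithinAt (hE a x) (-a * x ^ (-a - 1)) (Iic x) x := by
      refine ((linDeriv a x x).hasDerivWithinAt).congr (fun y hy => ?_) ?_
      · by_cases h : x ≤ y
        · have : y = x := le_antisymm hy h
          subst this
          simp [hE, if_pos le_rfl]
        · simp [hE, if_neg h]
      · simp [hE, if_pos le_rfl]
    have hright : HasDerivWithinAt (hE a x) (-a * x ^ (-a - 1)) (Ici x) x := by
      have hr : HasDerivAt (fun y : ℝ => y ^ (-a)) (-a * x ^ (-a - 1)) x := by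
        simpa using Real.hasDerivAt_rpow_const (p := -a) (Or.inl hne)
      refine hr.hasDerivWithinAt.congr (fun y hy => ?_) ?_
      · simp [hE, if_pos (mem_Ici.mp hy)]
      · simp [hE, if_pos le_rfl]
    have := hleft.union hright
    rw [Iic_union_Ici] at this
    have h2 := hasDerivWithinAt_univ.mp this
    simpa [dE, if_pos le_rfl] using h2
  · have hev : hE a ε =ᶠ[nhds x] fun y : ℝ => y ^ (-a) := by
      filter_upwards [Ioi_mem_nhds hgt] with y hy
      exact if_pos hy.le
    have hr : HasDerivAt (fun y : ℝ => y ^ (-a)) (-a * x ^ (-a - 1)) x := by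
      simpa using Real.hasDerivAt_rpow_const (p := -a) (Or.inl (hε.trans hgt).ne')
    have := hr.congr_of_eventuallyEq hev
    simpa [dE, if_pos hgt.le] using this

lemma dE_mono {a ε : ℝ} (ha : 0 ≤ a) (hε : 0 < ε) : Monotone (dE a ε) := by
  intro x y hxy
  unfold dE
  split_ifs with h1 h2 h2
  · have hb : y ^ (-a - 1) ≤ x ^ (-a - 1) :=
      Real.rpow_le_rpow_of_nonpos (lt_of_lt_of_le hε h1) hxy (by linarith)
    nlinarith [mul_le_mul_of_nonneg_left hb ha]
  · exact absurd (h1.trans hxy) h2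
  · have hb : y ^ (-a - 1) ≤ ε ^ (-a - 1) :=
      Real.rpow_le_rpow_of_nonpos hε h2 (by linarith)
    nlinarith [mul_le_mul_of_nonneg_left hb ha]
  · exact le_rfl

lemma hE_convex {a ε : ℝ} (ha : 0 ≤ a) (hε : 0 < ε) : ConvexOn ℝ univ (hE a ε) := by
  have hdiff : Differentiable ℝ (hE a ε) := fun x => (hE_hasDerivAt hε x).differentiableAt
  have hderiv : deriv (hE a ε) = dE a ε := funext fun x => (hE_hasDerivAt hε x).deriv
  exact Monotone.convexOn_univ_of_deriv hdiff (hderiv ▸ dE_mono ha hε)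



lemma bern_key {a r : ℝ} (ha : 0 ≤ a) (ha1 : a < 1) (hr0 : 0 < r) (hr1 : r < 1) :
    1 + a * (1 - r) ≤ r ^ (-a) := by
  rcases eq_or_lt_of_le ha with rfl | hapos
  · simp
  · have hbern : (1 + (r - 1)) ^ a < 1 + a * (r - 1) :=
      rpow_one_add_lt_one_add_mul_self (by linarith) (by intro h; nlinarith) hapos ha1
    have hra : r ^ a < 1 - a * (1 - r) := by
      have h1 : 1 + (r - 1) = r := by ring
      rw [h1] at hbern
      nlinarith
    have hR : r ^ (-a) = (r ^ a)⁻¹ := Real.rpow_neg hr0.le a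
    have hpos : (0:ℝ) < r ^ a := Real.rpow_pos_of_pos hr0 a
    have hu1 : a * (1 - r) < 1 := by nlinarith
    rw [hR]
    have h2 : (1 + a * (1 - r)) * (r ^ a) < (1 + a * (1 - r)) * (1 - a * (1 - r)) :=
      mul_lt_mul_of_pos_left hra (by nlinarith)
    have h3 : (1 + a * (1 - r)) * (1 - a * (1 - r)) ≤ 1 := by nlinarith [sq_nonneg (a * (1 - r))]
    rw [inv_eq_one_div, le_div_iff₀ hpos]
    nlinarith


lemma tangent_le {a ε x : ℝ} (ha : 0 ≤ a) (ha1 : a < 1) (hε : 0 < ε) (hx : 0 < x)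
    (hxε : x < ε) :
    ε ^ (-a) - a * ε ^ (-a - 1) * (x - ε) ≤ x ^ (-a) := by
  set r := x / ε with hr
  have hr0 : 0 < r := div_pos hx hε
  have hr1 : r < 1 := (div_lt_one hε).2 hxε
  have key := bern_key ha ha1 hr0 hr1
  have hx' : x = ε * r := by rw [hr]; field_simp
  have hxpow : x ^ (-a) = ε ^ (-a) * r ^ (-a) := by
    rw [hx', Real.mul_rpow hε.le hr0.le]
  have hεsub : ε ^ (-a - 1) = ε ^ (-a) / ε := by
    rw [show (-a - 1 : ℝ) = -a - 1 from rfl, Real.rpow_sub hε, Real.rpow_one]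
  have hεpos : (0:ℝ) < ε ^ (-a) := Real.rpow_pos_of_pos hε _
  have hlhs : ε ^ (-a) - a * ε ^ (-a - 1) * (x - ε) = ε ^ (-a) * (1 + a * (1 - r)) := by
    rw [hεsub, hr]
    field_simp
    ring
  rw [hlhs, hxpow]
  exact mul_le_mul_of_nonneg_left key hεpos.le



variable {Ω : Type*} [MeasurableSpace Ω] {P : Measure Ω}

lemma convexOn_affine (c d : ℝ) : ConvexOn ℝ (univ : Set ℝ) (fun x => c * x + d) := by
  refine ⟨convex_univ, fun x _ y _ p q hp hq hpq => le_of_eq ?_⟩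
  simp only [smul_eq_mul]
  have hq1 : q = 1 - p := by linarith
  subst hq1
  ring

lemma convexOn_maxAffine (c d : ℝ) :
    ConvexOn ℝ (univ : Set ℝ) (fun x => max (c * x + d) 0) := by
  have h := (convexOn_affine c d).sup (convexOn_const (0:ℝ) convex_univ)
  exact h

lemma negpart_zero_integrable [IsProbabilityMeasure P] {g : Ω → ℝ} (hg : ∀ ω, 0 ≤ g ω) :
    Integrable (fun ω => max (-(g ω)) 0) P := by
  have : (fun ω => max (-(g ω)) 0) = fun _ => (0:ℝ) :=
    funext fun ω => max_eq_right (neg_nonpos.mpr (hg ω))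
  rw [this]
  exact integrable_const 0

lemma ae_le_one [IsProbabilityMeasure P] {X : Ω → ℝ} (hs : SubUniform P X) :
    ∀ᵐ ω ∂P, X ω ≤ 1 := by
  have hconv : ConvexOn ℝ (univ : Set ℝ) (fun x => max (1 * x + (-1)) 0) :=
    convexOn_maxAffine 1 (-1)
  obtain ⟨hint, hle⟩ := hs _ hconv (negpart_zero_integrable fun ω => le_max_right _ _)
  have hIcc : (∫ x in Icc (0:ℝ) 1, max (1 * x + (-1)) 0 ∂volume) = 0 := by
    rw [setIntegral_congr_fun measurableSet_Icc
      (g := fun _ => (0:ℝ)) (fun x hx => max_eq_right (by simp at hx ⊢; linarith [hx.2]))]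
    simp
  have h0 : (∫ ω, max (1 * X ω + (-1)) 0 ∂P) = 0 :=
    le_antisymm (le_of_le_of_eq hle hIcc) (integral_nonneg fun ω => le_max_right _ _)
  have hz := (integral_eq_zero_iff_of_nonneg (fun ω => le_max_right _ _) hint).1 h0
  filter_upwards [hz] with ω hω
  simp only [Pi.zero_apply] at hω
  have h2 := le_max_left (1 * X ω + (-1)) (0:ℝ)
  rw [hω] at h2
  linarith

lemma ae_pos [IsProbabilityMeasure P] {X : Ω → ℝ} (hm : Measurable X) (hs : SubUniform P X) :
    ∀ᵐ ω ∂P, 0 < X ω := by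
  set A : Set Ω := {ω | X ω ≤ 0} with hA
  have hAm : MeasurableSet A := hm measurableSet_Iic
  have key : ∀ k : ℕ, (P A).toReal ≤ 1 / ((k:ℝ) + 1) := by
    intro k
    set M : ℝ := (k:ℝ) + 1 with hM
    have hM0 : 0 < M := by positivity
    have hconv := convexOn_maxAffine (-M) 1
    obtain ⟨hint, hle⟩ := hs _ hconv (negpart_zero_integrable fun ω => le_max_right _ _)
    -- bound the Icc integral by 1/M
    have hexp : ∀ x : ℝ, max (-M * x + 1) 0 ≤ Real.exp (-M * x) := fun x =>
      max_le (by nlinarith [Real.add_one_le_exp (-M * x)]) (Real.exp_pos _).le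
    have hcont1 : Continuous fun x : ℝ => max (-M * x + 1) 0 :=
      ((continuous_const.mul continuous_id).add continuous_const).max continuous_const
    have hcont2 : Continuous fun x : ℝ => Real.exp (-M * x) :=
      Real.continuous_exp.comp (continuous_const.mul continuous_id)
    have hIcc : (∫ x in Icc (0:ℝ) 1, max (-M * x + 1) 0 ∂volume) ≤ 1 / M := by
      have hi1 : IntegrableOn (fun x : ℝ => max (-M * x + 1) 0) (Icc 0 1) volume :=
        hcont1.integrableOn_Icc
      have hi2 : IntegrableOn (fun x : ℝ => Real.exp (-M * x)) (Icc 0 1) volume :=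
        hcont2.integrableOn_Icc
      have hmono := setIntegral_mono_on hi1 hi2 measurableSet_Icc (fun x _ => hexp x)
      refine hmono.trans ?_
      rw [MeasureTheory.integral_Icc_eq_integral_Ioc,
        ← intervalIntegral.integral_of_le (zero_le_one)]
      have hcomp := intervalIntegral.integral_comp_mul_left (a := (0:ℝ)) (b := 1)
        (fun y => Real.exp y) (c := -M) (by linarith : (-M:ℝ) ≠ 0)
      rw [hcomp, integral_exp]
      have hEpos := Real.exp_pos (-M * 1)
      have : (-M)⁻¹ = -(M⁻¹) := by field_simp
      rw [smul_eq_mul, this]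
      have hMinv : 0 < M⁻¹ := by positivity
      rw [one_div]
      have he0 : Real.exp (-M * 0) = 1 := by norm_num
      rw [he0]
      nlinarith [mul_pos hMinv hEpos]
    -- P A ≤ ∫ h(X)
    have h1 : (P A).toReal ≤ ∫ ω in A, max (-M * X ω + 1) 0 ∂P := by
      have hconst : (∫ _ in A, (1:ℝ) ∂P) = (P A).toReal := by
        simp [setIntegral_const]; rfl
      rw [← hconst]
      refine setIntegral_mono_on (integrableOn_const (measure_ne_top P A))
        hint.integrableOn hAm (fun ω hω => ?_)
      have hX0 : X ω ≤ 0 := hω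
      have : (1:ℝ) ≤ -M * X ω + 1 := by nlinarith
      exact this.trans (le_max_left _ _)
    have h2 : (∫ ω in A, max (-M * X ω + 1) 0 ∂P) ≤ ∫ ω, max (-M * X ω + 1) 0 ∂P :=
      setIntegral_le_integral hint (Filter.Eventually.of_forall fun ω => le_max_right _ _)
    exact h1.trans (h2.trans (hle.trans hIcc))
  have hto : (P A).toReal ≤ 0 :=
    ge_of_tendsto' tendsto_one_div_add_atTop_nhds_zero_nat key
  have hPA : P A = 0 := by
    have h0 : (P A).toReal = 0 := le_antisymm hto ENNReal.toReal_nonneg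
    rcases (ENNReal.toReal_eq_zero_iff _).1 h0 with h | h
    · exact h
    · exact absurd h (measure_ne_top P A)
  rw [ae_iff]
  convert hPA using 2
  ext ω
  simp [A, not_lt]

lemma ae_Ioc [IsProbabilityMeasure P] {X : Ω → ℝ} (hm : Measurable X) (hs : SubUniform P X) :
    ∀ᵐ ω ∂P, X ω ∈ Ioc (0:ℝ) 1 := by
  filter_upwards [ae_le_one hs, ae_pos hm hs] with ω h1 h2
  exact ⟨h2, h1⟩

variable {Ω : Type*} [MeasurableSpace Ω] {P : Measure Ω}

lemma hE_nonneg {a ε : ℝ} (ha : 0 ≤ a) (hε : 0 < ε) (x : ℝ) : 0 ≤ hE a ε x := by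
  unfold hE
  split_ifs with h
  · exact Real.rpow_nonneg (hε.le.trans h) _
  · have h1 : (0:ℝ) < ε ^ (-a) := Real.rpow_pos_of_pos hε _
    have h2 : (0:ℝ) ≤ ε ^ (-a - 1) := (Real.rpow_pos_of_pos hε _).le
    push_neg at h
    nlinarith [mul_nonneg (mul_nonneg ha h2) (le_of_lt (sub_pos.2 h))]

lemma max_rpow_le_hE {a ε : ℝ} (ha : 0 ≤ a) (hε : 0 < ε) (x : ℝ) :
    (max x ε) ^ (-a) ≤ hE a ε x := by
  unfold hE
  split_ifs with h
  · rw [max_eq_left h]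
  · push_neg at h
    rw [max_eq_right h.le]
    have h2 : (0:ℝ) ≤ ε ^ (-a - 1) := (Real.rpow_pos_of_pos hε _).le
    nlinarith [mul_nonneg (mul_nonneg ha h2) (le_of_lt (sub_pos.2 h))]

lemma step_eps [IsProbabilityMeasure P] {X : Ω → ℝ} (hm : Measurable X)
    (hs : SubUniform P X) {a ε : ℝ} (ha : 0 ≤ a) (ha1 : a < 1) (hε : 0 < ε) :
    ∫⁻ ω, ENNReal.ofReal ((max (X ω) ε) ^ (-a)) ∂P ≤ ENNReal.ofReal (1 / (1 - a)) := by
  obtain ⟨hint, hle⟩ := hs (hE a ε) (hE_convex ha hε)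
    (negpart_zero_integrable fun ω => hE_nonneg ha hε _)
  have hIcc : (∫ x in Icc (0:ℝ) 1, hE a ε x ∂volume) ≤ 1 / (1 - a) := by
    rw [MeasureTheory.integral_Icc_eq_integral_Ioc]
    have hcont : Continuous (hE a ε) :=
      continuous_iff_continuousAt.2 fun x => (hE_hasDerivAt hε x).continuousAt
    have hi1 : IntegrableOn (hE a ε) (Ioc 0 1) volume :=
      (hcont.integrableOn_Icc).mono_set Ioc_subset_Icc_self
    have hi2 : IntegrableOn (fun x : ℝ => x ^ (-a)) (Ioc 0 1) volume := by
      have h := intervalIntegral.intervalIntegrable_rpow' (a := 0) (b := 1) (show (-1:ℝ) < -a by linarith)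
      rwa [intervalIntegrable_iff_integrableOn_Ioc_of_le zero_le_one] at h
    have hmono := setIntegral_mono_on hi1 hi2 measurableSet_Ioc (fun x hx => by
      unfold hE
      split_ifs with h
      · exact le_rfl
      · push_neg at h
        exact tangent_le ha ha1 hε hx.1 h)
    refine hmono.trans ?_
    rw [← intervalIntegral.integral_of_le zero_le_one]
    have hint2 : (∫ x in (0:ℝ)..1, x ^ (-a)) = ((1:ℝ) ^ (-a + 1) - (0:ℝ) ^ (-a + 1)) / (-a + 1) := by
      open intervalIntegral in exact integral_rpow (Or.inl (by linarith))
    rw [hint2, Real.one_rpow, Real.zero_rpow (by intro hcon; linarith)]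
    rw [show (-a + 1 : ℝ) = 1 - a by ring]
    simp
  calc ∫⁻ ω, ENNReal.ofReal ((max (X ω) ε) ^ (-a)) ∂P
      ≤ ∫⁻ ω, ENNReal.ofReal (hE a ε (X ω)) ∂P :=
        lintegral_mono fun ω => ENNReal.ofReal_le_ofReal (max_rpow_le_hE ha hε _)
    _ = ENNReal.ofReal (∫ ω, hE a ε (X ω) ∂P) :=
        (ofReal_integral_eq_lintegral_ofReal hint
          (Filter.Eventually.of_forall fun ω => hE_nonneg ha hε _)).symm
    _ ≤ ENNReal.ofReal (1 / (1 - a)) := ENNReal.ofReal_le_ofReal (hle.trans hIcc)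

lemma moment_bound [IsProbabilityMeasure P] {X : Ω → ℝ} (hm : Measurable X)
    (hs : SubUniform P X) {a : ℝ} (ha : 0 ≤ a) (ha1 : a < 1) :
    ∫⁻ ω, ENNReal.ofReal (Real.exp (-a * Real.log (X ω))) ∂P
      ≤ ENNReal.ofReal (1 / (1 - a)) := by
  set F : ℕ → Ω → ENNReal := fun k ω =>
    ENNReal.ofReal ((max (X ω) (1 / ((k:ℝ) + 1))) ^ (-a)) with hF
  have hεpos : ∀ k : ℕ, (0:ℝ) < 1 / ((k:ℝ) + 1) := fun k => by positivity
  have hcongr : ∀ᵐ ω ∂P,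
      ENNReal.ofReal (Real.exp (-a * Real.log (X ω))) = ⨆ k, F k ω := by
    filter_upwards [ae_Ioc hm hs] with ω hω
    obtain ⟨hx0, hx1⟩ := hω
    have hrw : Real.exp (-a * Real.log (X ω)) = (X ω) ^ (-a) := by
      rw [Real.rpow_def_of_pos hx0, mul_comm]
    rw [hrw]
    refine le_antisymm ?_ (iSup_le fun k => ENNReal.ofReal_le_ofReal ?_)
    · set k₀ := Nat.ceil (1 / X ω) with hk₀
      have h1 : 1 / X ω ≤ (k₀ : ℝ) + 1 := (Nat.le_ceil _).trans (by linarith)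
      have h2 : 1 / ((k₀:ℝ) + 1) ≤ X ω := by
        rw [div_le_iff₀ (by positivity)]
        rw [div_le_iff₀ hx0] at h1
        linarith
      refine le_iSup_of_le k₀ (le_of_eq ?_)
      rw [hF]
      simp only
      rw [max_eq_left h2]
    · exact Real.rpow_le_rpow_of_nonpos hx0 (le_max_left _ _) (neg_nonpos.2 ha)
  rw [lintegral_congr_ae hcongr]
  have hmeasF : ∀ k, Measurable (F k) := by
    intro k
    have : F k = fun ω => ENNReal.ofReal
        (Real.exp (-a * Real.log (max (X ω) (1 / ((k:ℝ) + 1))))) := by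
      funext ω
      rw [hF]
      simp only
      rw [Real.rpow_def_of_pos (lt_max_of_lt_right (hεpos k)), mul_comm]
    rw [this]
    exact (((hm.max measurable_const).log.const_mul (-a)).exp).ennreal_ofReal
  have hmonoF : Monotone F := by
    intro k l hkl
    intro ω
    apply ENNReal.ofReal_le_ofReal
    have hbase : 1 / ((l:ℝ) + 1) ≤ 1 / ((k:ℝ) + 1) := by
      apply one_div_le_one_div_of_le (by positivity)
      have : (k:ℝ) ≤ (l:ℝ) := Nat.cast_le.2 hkl
      linarith
    exact Real.rpow_le_rpow_of_nonpos
      (lt_max_of_lt_right (hεpos l))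
      (max_le_max le_rfl hbase) (neg_nonpos.2 ha)
  rw [lintegral_iSup hmeasF hmonoF]
  exact iSup_le fun k => step_eps hm hs ha ha1 (hεpos k)

open ProbabilityTheory

lemma lintegral_prod_indep {Ω : Type*} [MeasurableSpace Ω] {P : Measure Ω}
    [IsProbabilityMeasure P] {n : ℕ} {Y : Fin n → Ω → ENNReal}
    (hmeas : ∀ i, Measurable (Y i))
    (hind : iIndepFun Y P) (s : Finset (Fin n)) :
    ∫⁻ ω, ∏ i ∈ s, Y i ω ∂P = ∏ i ∈ s, ∫⁻ ω, Y i ω ∂P := by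
  classical
  induction s using Finset.induction_on with
  | empty => simp
  | @insert i s hi ih =>
    simp only [Finset.prod_insert hi]
    rw [← ih]
    have hindep : IndepFun (Y i) (∏ j ∈ s, Y j) P :=
      (hind.indepFun_finsetProd_of_notMem hmeas hi).symm
    have hprodmeas : Measurable (∏ j ∈ s, Y j) := by
      have hfn : (∏ j ∈ s, Y j) = fun ω => ∏ j ∈ s, Y j ω :=
        funext fun ω => Finset.prod_apply ω s Y
      rw [hfn]
      exact Finset.measurable_prod s fun j _ => hmeas j
    have h := lintegral_mul_eq_lintegral_mul_lintegral_of_indepFun (hmeas i) hprodmeas hindep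
    calc ∫⁻ ω, Y i ω * ∏ j ∈ s, Y j ω ∂P
        = ∫⁻ ω, (Y i * ∏ j ∈ s, Y j) ω ∂P :=
          lintegral_congr fun ω => by simp [Finset.prod_apply]
      _ = (∫⁻ ω, Y i ω ∂P) * ∫⁻ ω, (∏ j ∈ s, Y j) ω ∂P := h
      _ = (∫⁻ ω, Y i ω ∂P) * ∫⁻ ω, ∏ j ∈ s, Y j ω ∂P := by
          congr 1
          exact lintegral_congr fun ω => by simp [Finset.prod_apply]


end SubUnifAux

open ProbabilityTheory SubUnifAux in
/-- Let `X₁, …, Xₙ` be independent sub-uniform random variables (so that each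
`Xᵢ ∈ (0,1]` almost surely) and let `Fₙ = −2 ∑ᵢ log(Xᵢ)` be Fisher's combination
statistic.  Then for every `t ≥ 2n`,
`P(Fₙ ≥ t) ≤ exp{n − t/2 − n log(2n/t)}`. -/
theorem subUniform_fisher_bound {Ω : Type*} [MeasurableSpace Ω] (P : Measure Ω)
    [IsProbabilityMeasure P] (n : ℕ) (hn : 0 < n) (X : Fin n → Ω → ℝ)
    (hmeas : ∀ i, Measurable (X i))
    (hind : iIndepFun X P)
    (hsub : ∀ i, SubUniform P (X i))
    (t : ℝ) (ht : 2 * n ≤ t) :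
    P {ω | -2 * ∑ i, Real.log (X i ω) ≥ t} ≤
      ENNReal.ofReal (Real.exp (n - t / 2 - n * Real.log (2 * n / t))) := by
  have hn' : (0:ℝ) < n := Nat.cast_pos.2 hn
  have htpos : (0:ℝ) < t := lt_of_lt_of_le (by positivity) ht
  set a : ℝ := 1 - 2 * n / t with ha_def
  have hfrac_pos : (0:ℝ) < 2 * n / t := by positivity
  have hfrac_le : 2 * (n:ℝ) / t ≤ 1 := (div_le_one htpos).2 ht
  have ha0 : 0 ≤ a := by simp only [ha_def]; linarith
  have ha1 : a < 1 := by simp only [ha_def]; linarith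
  have hone_sub : 1 - a = 2 * n / t := by simp [ha_def]
  have hinv : 1 / (1 - a) = t / (2 * n) := by rw [hone_sub, one_div_div]
  -- the independent ENNReal-valued factors
  set Y : Fin n → Ω → ENNReal := fun i ω =>
    ENNReal.ofReal (Real.exp (-a * Real.log (X i ω))) with hY
  have hYmeas : ∀ i, Measurable (Y i) := fun i =>
    (((hmeas i).log.const_mul (-a)).exp).ennreal_ofReal
  have hYind : iIndepFun Y P := by
    apply hind.comp (fun i (x : ℝ) => ENNReal.ofReal (Real.exp (-a * Real.log x)))
    exact fun i => ((Real.measurable_log.const_mul (-a)).exp).ennreal_ofReal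
  set c : ENNReal := ENNReal.ofReal (Real.exp (a * t / 2)) with hc
  -- event inclusion
  have hsubset : {ω | -2 * ∑ i, Real.log (X i ω) ≥ t} ⊆
      {ω | c ≤ (fun ω => ∏ i, Y i ω) ω} := by
    intro ω hω
    have hω' : t ≤ -2 * ∑ i, Real.log (X i ω) := hω
    have hS : (∑ i, Real.log (X i ω)) ≤ -t / 2 := by linarith
    have hprod : (∏ i, Y i ω) =
        ENNReal.ofReal (Real.exp (-a * ∑ i, Real.log (X i ω))) := by
      rw [hY]
      simp only
      rw [← ENNReal.ofReal_prod_of_nonneg (fun i _ => (Real.exp_pos _).le),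
        ← Real.exp_sum, ← Finset.mul_sum]
    show c ≤ ∏ i, Y i ω
    rw [hprod, hc]
    apply ENNReal.ofReal_le_ofReal
    apply Real.exp_le_exp.2
    nlinarith [mul_le_mul_of_nonneg_left hS ha0]
  have hprodmeas : Measurable (fun ω => ∏ i, Y i ω) := by
    apply Finset.measurable_prod
    exact fun i _ => hYmeas i
  have hmarkov := mul_meas_ge_le_lintegral₀ (μ := P) hprodmeas.aemeasurable c
  have hprodbound : (∫⁻ ω, ∏ i, Y i ω ∂P) ≤ ENNReal.ofReal ((t / (2 * n)) ^ n) := by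
    rw [lintegral_prod_indep hYmeas hYind Finset.univ]
    have hbound : ∀ i : Fin n, (∫⁻ ω, Y i ω ∂P) ≤ ENNReal.ofReal (t / (2 * n)) := by
      intro i
      have := moment_bound (hmeas i) (hsub i) ha0 ha1
      rwa [hinv] at this
    calc (∏ i : Fin n, ∫⁻ ω, Y i ω ∂P)
        ≤ ∏ _i : Fin n, ENNReal.ofReal (t / (2 * n)) :=
          Finset.prod_le_prod' fun i _ => hbound i
      _ = ENNReal.ofReal (t / (2 * n)) ^ n := by
          rw [Finset.prod_const, Finset.card_univ, Fintype.card_fin]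
      _ = ENNReal.ofReal ((t / (2 * n)) ^ n) := by
          rw [ENNReal.ofReal_pow (by positivity)]
  -- from Markov
  have hmeasle : P {ω | -2 * ∑ i, Real.log (X i ω) ≥ t} ≤
      P {ω | c ≤ (fun ω => ∏ i, Y i ω) ω} := measure_mono hsubset
  have hchain : c * P {ω | -2 * ∑ i, Real.log (X i ω) ≥ t} ≤
      ENNReal.ofReal ((t / (2 * n)) ^ n) := by
    calc c * P {ω | -2 * ∑ i, Real.log (X i ω) ≥ t}
        ≤ c * P {ω | c ≤ (fun ω => ∏ i, Y i ω) ω} :=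
          mul_le_mul_right hmeasle c
      _ ≤ ∫⁻ ω, ∏ i, Y i ω ∂P := hmarkov
      _ ≤ ENNReal.ofReal ((t / (2 * n)) ^ n) := hprodbound
  -- identify the RHS
  have hRident : Real.exp ((n:ℝ) - t / 2 - n * Real.log (2 * n / t)) =
      Real.exp (-(a * t) / 2) * (t / (2 * n)) ^ n := by
    have e1 : -(a * t) / 2 = (n:ℝ) - t / 2 := by
      rw [ha_def]
      field_simp
      ring
    have e2 : ((t / (2 * n)) : ℝ) ^ n = Real.exp (-((n:ℝ) * Real.log (2 * n / t))) := by
      have hl : Real.log (2 * n / t) = -Real.log (t / (2 * n)) := by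
        rw [← Real.log_inv, inv_div]
      rw [hl]
      rw [show -((n:ℝ) * -Real.log (t / (2 * n))) = (n:ℝ) * Real.log (t / (2 * n)) by ring]
      rw [Real.exp_nat_mul, Real.exp_log (by positivity)]
    rw [e2, ← Real.exp_add, e1]
    ring_nf
  rw [hRident]
  -- finish: multiply both sides by c
  have hB : c * (ENNReal.ofReal (Real.exp (-(a * t) / 2) * (t / (2 * n)) ^ n)) =
      ENNReal.ofReal ((t / (2 * n)) ^ n) := by
    rw [hc, ← ENNReal.ofReal_mul (Real.exp_pos _).le]
    congr 1
    rw [← mul_assoc, ← Real.exp_add]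
    rw [show a * t / 2 + -(a * t) / 2 = 0 by ring, Real.exp_zero, one_mul]
  have hc0 : c ≠ 0 := by
    rw [hc]
    simp [ENNReal.ofReal_eq_zero, not_le, Real.exp_pos]
  have hctop : c ≠ ⊤ := ENNReal.ofReal_ne_top
  rw [← ENNReal.mul_le_mul_iff_right hc0 hctop, hB]
  exact hchain
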